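/- arXiv:2605.15996 — 2 statements merged into one kernel-verified Lean document; each statement's English description precedes it below -/
import Mathlib

section
/- Let T be a tree on n vertices with diameter D = max_{u,v} ℓ(u,v), where ℓ(u,v) is the number of vertices on the path from u to v. Let X₁,…,X_N be i.i.d. uniform vertices, ℓ̃(u,v) = |{i : Xᵢ ∈ \overline{uv}}|, and d* = max_{i,j} ℓ̃(Xᵢ,Xⱼ). If diam(T) < (1−δ)D' for some threshold D' and δ ∈ (0,1), then P(d*/N > (D'/n)(1−δ/2)) ≤ n² · exp(−3δ²ND'/(4n(6−5δ))). -/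
open MeasureTheory Real
open scoped Classical

open scoped ENNReal Finset


lemma aux_one_sub_mul_exp_le (x : ℝ) : (1 - x) * Real.exp x ≤ 1 := by
  rcases le_or_gt (1 - x) 0 with h | h
  · exact le_trans (mul_nonpos_of_nonpos_of_nonneg h (Real.exp_pos x).le) zero_le_one
  · have h1 : 1 - x ≤ Real.exp (-x) := by
      have := Real.add_one_le_exp (-x); linarith
    calc (1 - x) * Real.exp x ≤ Real.exp (-x) * Real.exp x :=
          mul_le_mul_of_nonneg_right h1 (Real.exp_pos x).le
      _ = 1 := by rw [← Real.exp_add]; simp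

lemma aux_G_nonneg (x : ℝ) (hx : 0 ≤ x) : 0 ≤ (2 + x) - (2 - x) * Real.exp x := by
  set G : ℝ → ℝ := fun y => (2 + y) - (2 - y) * Real.exp y with hG
  have hd : ∀ y : ℝ, HasDerivAt G (1 - (1 - y) * Real.exp y) y := by
    intro y
    have h1 : HasDerivAt (fun y : ℝ => (2 - y) * Real.exp y)
        ((-1) * Real.exp y + (2 - y) * Real.exp y) y :=
      ((hasDerivAt_id y).const_sub 2 |>.mul (Real.hasDerivAt_exp y))
    have h2 : HasDerivAt (fun y : ℝ => 2 + y) 1 y := (hasDerivAt_id y).const_add 2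
    have := h2.sub h1
    exact this.congr_deriv (by ring)
  have hmono : MonotoneOn G (Set.Ici (0 : ℝ)) := by
    apply monotoneOn_of_deriv_nonneg (convex_Ici 0)
      (Continuous.continuousOn (by continuity))
      (fun y _ => (hd y).differentiableAt.differentiableWithinAt)
    intro y hy
    rw [(hd y).deriv]
    have := aux_one_sub_mul_exp_le y
    linarith
  have h0 : G 0 = 0 := by simp [hG]
  have := hmono (Set.self_mem_Ici) (Set.mem_Ici.mpr hx) hx
  rw [h0] at this
  exact this

lemma aux_exp_bound (x : ℝ) (hx : 0 ≤ x) :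
    (1 - x / 3) * Real.exp x ≤ 1 + 2 * x / 3 + x ^ 2 / 6 := by
  set F : ℝ → ℝ := fun y => 1 + 2 * y / 3 + y ^ 2 / 6 - (1 - y / 3) * Real.exp y with hF
  have hd : ∀ y : ℝ, HasDerivAt F (((2 + y) - (2 - y) * Real.exp y) / 3) y := by
    intro y
    have h1 : HasDerivAt (fun y : ℝ => (1 - y / 3) * Real.exp y)
        ((-(1/3)) * Real.exp y + (1 - y / 3) * Real.exp y) y := by
      have : HasDerivAt (fun y : ℝ => 1 - y / 3) (-(1/3)) y := by
        have := ((hasDerivAt_id y).div_const 3).const_sub 1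
        exact this.congr_deriv (by norm_num)
      exact this.mul (Real.hasDerivAt_exp y)
    have h2 : HasDerivAt (fun y : ℝ => 1 + 2 * y / 3 + y ^ 2 / 6) (2/3 + y/3) y := by
      have ha : HasDerivAt (fun y : ℝ => 1 + 2 * y / 3) (2/3) y := by
        have := (((hasDerivAt_id y).const_mul 2).div_const 3).const_add 1
        exact this.congr_deriv (by norm_num)
      have hb : HasDerivAt (fun y : ℝ => y ^ 2 / 6) (y/3) y := by
        have := ((hasDerivAt_pow 2 y)).div_const 6
        exact this.congr_deriv (by norm_num; ring)
      exact ha.add hb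
    have := h2.sub h1
    exact this.congr_deriv (by ring)
  have hmono : MonotoneOn F (Set.Ici (0 : ℝ)) := by
    apply monotoneOn_of_deriv_nonneg (convex_Ici 0)
      (Continuous.continuousOn (by continuity))
      (fun y _ => (hd y).differentiableAt.differentiableWithinAt)
    intro y hy
    rw [(hd y).deriv]
    have := aux_G_nonneg y (le_of_lt (by simpa using hy))
    linarith
  have h0 : F 0 = 0 := by simp [hF]
  have := hmono (Set.self_mem_Ici) (Set.mem_Ici.mpr hx) hx
  rw [h0] at this
  simp only [hF] at this
  linarith

lemma aux_bracket (δ : ℝ) (hδ0 : 0 < δ) (hδ1 : δ < 1) :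
    (1 - δ) * (Real.exp (3 * δ / (6 - 5 * δ)) - 1) - (3 * δ / (6 - 5 * δ)) * (1 - δ / 2)
      + 3 * δ ^ 2 / (4 * (6 - 5 * δ)) ≤ 0 := by
  set L : ℝ := 3 * δ / (6 - 5 * δ) with hL
  have h65 : 0 < 6 - 5 * δ := by linarith
  have hL0 : 0 ≤ L := by positivity
  have hden : (0:ℝ) < 1 - L / 3 := by
    have h1 : (0:ℝ) < 1 - δ := by linarith
    have : 1 - L / 3 = 6 * (1 - δ) / (6 - 5 * δ) := by rw [hL]; field_simp [show (6:ℝ) - δ * 5 ≠ 0 by linarith]; ring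
    rw [this]; positivity
  have hexp : Real.exp L ≤ (1 + 2 * L / 3 + L ^ 2 / 6) / (1 - L / 3) := by
    rw [le_div_iff₀ hden]
    have := aux_exp_bound L hL0
    linarith [mul_comm (Real.exp L) (1 - L/3)]
  have h1δ : (0:ℝ) ≤ 1 - δ := by linarith
  have key : (1 - δ) * ((1 + 2 * L / 3 + L ^ 2 / 6) / (1 - L / 3) - 1)
      - L * (1 - δ / 2) + 3 * δ ^ 2 / (4 * (6 - 5 * δ)) = 0 := by
    have hne1 : (6 - 5*δ) ≠ 0 := ne_of_gt h65
    have hne2 : (1 - δ) ≠ 0 := by intro h; linarith [sub_eq_zero.mp h]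
    have hsub : 1 - L / 3 = 6 * (1 - δ) / (6 - 5 * δ) := by rw [hL]; field_simp [show (6:ℝ) - δ * 5 ≠ 0 by linarith]; ring
    rw [hsub, hL]
    field_simp [show (6:ℝ) - δ * 5 ≠ 0 by linarith]
    ring
  have h2 : (1 - δ) * (Real.exp L - 1) ≤
      (1 - δ) * ((1 + 2 * L / 3 + L ^ 2 / 6) / (1 - L / 3) - 1) := by

    apply mul_le_mul_of_nonneg_left _ h1δ
    linarith
  linarith

lemma aux_count {V : Type*} [Fintype V] [DecidableEq V] (A : Finset V) (N : ℕ)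
    (a lam : ℝ) (hlam : 0 ≤ lam) :
    ((Finset.univ.filter fun f : Fin N → V =>
        a < (((Finset.univ.filter fun i => f i ∈ A).card : ℕ) : ℝ)).card : ℝ)
      ≤ Real.exp (-(lam * a)) *
        ((A.card : ℝ) * Real.exp lam + ((Fintype.card V : ℝ) - A.card)) ^ N := by
  classical
  set X : (Fin N → V) → ℝ := fun f => (((Finset.univ.filter fun i => f i ∈ A).card : ℕ) : ℝ)
    with hX
  set g : V → ℝ := fun v => if v ∈ A then Real.exp lam else 1 with hg
  have hprod : ∀ f : Fin N → V, Real.exp (lam * X f) = ∏ i : Fin N, g (f i) := by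
    intro f
    have hsum : X f = ∑ i : Fin N, (if f i ∈ A then (1:ℝ) else 0) := by
      rw [hX]
      push_cast [Finset.card_filter]
      rfl
    rw [hsum, Finset.mul_sum, Real.exp_sum]
    apply Finset.prod_congr rfl
    intro i _
    by_cases h : f i ∈ A <;> simp [hg, h]
  have step1 : ((Finset.univ.filter fun f : Fin N → V => a < X f).card : ℝ)
      ≤ ∑ f : Fin N → V, Real.exp (lam * (X f - a)) := by
    rw [← Finset.sum_filter_add_sum_filter_not Finset.univ (fun f => a < X f)]
    have h1 : ((Finset.univ.filter fun f : Fin N → V => a < X f).card : ℝ)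
        ≤ ∑ f ∈ Finset.univ.filter fun f : Fin N → V => a < X f,
            Real.exp (lam * (X f - a)) := by
      have := Finset.card_nsmul_le_sum
          (Finset.univ.filter fun f : Fin N → V => a < X f)
          (fun f => Real.exp (lam * (X f - a))) 1 ?_
      · simpa using this
      · intro f hf
        have hf' := (Finset.mem_filter.mp hf).2
        have h0 : (0:ℝ) ≤ lam * (X f - a) := mul_nonneg hlam (by linarith)
        calc (1:ℝ) = Real.exp 0 := by simp
          _ ≤ Real.exp (lam * (X f - a)) := Real.exp_le_exp.mpr h0
    have h2 : (0:ℝ) ≤ ∑ f ∈ Finset.univ.filter fun f : Fin N → V => ¬ a < X f,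
        Real.exp (lam * (X f - a)) :=
      Finset.sum_nonneg fun f _ => (Real.exp_pos _).le
    linarith
  have step2 : ∑ f : Fin N → V, Real.exp (lam * (X f - a))
      = Real.exp (-(lam * a)) * ∑ f : Fin N → V, ∏ i : Fin N, g (f i) := by
    rw [Finset.mul_sum]
    apply Finset.sum_congr rfl
    intro f _
    rw [← hprod f, ← Real.exp_add]
    ring_nf
  have step3 : ∑ f : Fin N → V, ∏ i : Fin N, g (f i)
      = ((A.card : ℝ) * Real.exp lam + ((Fintype.card V : ℝ) - A.card)) ^ N := by
    have hswap : (∏ _i : Fin N, ∑ v : V, g v) = ∑ f ∈ Fintype.piFinset (fun _ : Fin N =>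
        (Finset.univ : Finset V)), ∏ i : Fin N, g (f i) :=
      Finset.prod_univ_sum _ _
    rw [Fintype.piFinset_univ] at hswap
    have hsum : ∑ v : V, g v = (A.card : ℝ) * Real.exp lam + ((Fintype.card V : ℝ) - A.card) := by
      rw [hg]
      rw [Finset.sum_ite, Finset.sum_const, Finset.sum_const]
      have h1 : Finset.univ.filter (· ∈ A) = A := by
        ext v; simp
      have h2 : Finset.univ.filter (· ∉ A) = Aᶜ := by
        ext v; simp
      rw [h1, h2, Finset.card_compl]
      have := A.card_le_univ
      rw [nsmul_eq_mul, nsmul_eq_mul, Nat.cast_sub this]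
      push_cast
      ring
    rw [← hswap, hsum, Finset.prod_const, Finset.card_univ, Fintype.card_fin]
  calc ((Finset.univ.filter fun f : Fin N → V => a < X f).card : ℝ)
      ≤ ∑ f : Fin N → V, Real.exp (lam * (X f - a)) := step1
    _ = Real.exp (-(lam * a)) * ∑ f : Fin N → V, ∏ i : Fin N, g (f i) := step2
    _ = _ := by rw [step3]

lemma aux_measure {V : Type*} [Fintype V] [DecidableEq V] [Nonempty V] [MeasurableSpace V]
    [MeasurableSingletonClass V] (N : ℕ) (s : Finset (Fin N → V)) :
    (Measure.pi fun _ : Fin N => (PMF.uniformOfFintype V).toMeasure) ↑s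
      = (s.card : ℝ≥0∞) * ((Fintype.card V : ℝ≥0∞))⁻¹ ^ N := by
  have hsingle : ∀ f : Fin N → V,
      (Measure.pi fun _ : Fin N => (PMF.uniformOfFintype V).toMeasure) {f}
        = ((Fintype.card V : ℝ≥0∞))⁻¹ ^ N := by
    intro f
    rw [← Set.univ_pi_singleton f, Measure.pi_pi]
    simp [PMF.toMeasure_apply_singleton _ _ (measurableSet_singleton _),
      PMF.uniformOfFintype_apply]
  rw [show (↑s : Set (Fin N → V)) = ⋃ f ∈ s, {f} by ext f; simp]
  rw [measure_biUnion_finset ?_ ?_]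
  · simp [hsingle, Finset.sum_const, mul_comm]
  · intro x _ y _ hxy
    simp [Set.disjoint_singleton, hxy]
  · intro f _
    exact measurableSet_singleton f

/-- Let `T` be a tree on `n` vertices with `diam T < (1−δ)D'` (diameter
counted in number of vertices of the longest path). With `X₁,…,X_N` i.i.d. uniform vertices,
`ℓ̃(u,v)` the number of sampled vertices on the path `u–v`, and
`d* = max_{i,j} ℓ̃(Xᵢ,Xⱼ)`, we have
`P(d*/N > (D'/n)(1−δ/2)) ≤ n² exp(−3δ²ND'/(4n(6−5δ)))`. -/
theorem stmt10 {V : Type*} [Fintype V] [DecidableEq V] [Nonempty V]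
    [MeasurableSpace V] [MeasurableSingletonClass V]
    (G : SimpleGraph V) (hG : G.IsTree)
    (n : ℕ) (hn : n = Fintype.card V)
    (D' : ℕ) (hD' : 1 ≤ D') (δ : ℝ) (hδ : δ ∈ Set.Ioo (0 : ℝ) 1)
    (hdiam : ∀ (u v : V) (p : G.Walk u v), p.IsPath →
      (p.support.length : ℝ) < (1 - δ) * D')
    (N : ℕ) (hN : 1 ≤ N)
    (μ : Measure (Fin N → V))
    (hμ : μ = Measure.pi fun _ => (PMF.uniformOfFintype V).toMeasure)
    (lt : V → V → (Fin N → V) → ℕ)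
    (hlt : ∀ (u v : V) (f : Fin N → V), lt u v f = (Finset.univ.filter fun i : Fin N =>
        ∃ p : G.Walk u v, p.IsPath ∧ f i ∈ p.support).card)
    (dstar : (Fin N → V) → ℕ)
    (hdstar : ∀ f, dstar f =
      (Finset.univ : Finset (Fin N × Fin N)).sup fun ij => lt (f ij.1) (f ij.2) f) :
    μ {f | (dstar f : ℝ) / N > ((D' : ℝ) / n) * (1 - δ / 2)} ≤
      ENNReal.ofReal ((n : ℝ) ^ 2 *
        Real.exp (-(3 * δ ^ 2 * N * D') / (4 * n * (6 - 5 * δ)))) := by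
  obtain ⟨hδ0, hδ1⟩ := hδ
  have hnpos : 0 < n := by rw [hn]; exact Fintype.card_pos
  have hnR : (0:ℝ) < n := by exact_mod_cast hnpos
  have hNR : (0:ℝ) < N := by exact_mod_cast hN
  have h65 : (0:ℝ) < 6 - 5 * δ := by linarith
  set q : ℝ := (D' : ℝ) / n with hq
  have hq0 : 0 ≤ q := by positivity
  set a : ℝ := N * (q * (1 - δ / 2)) with ha
  set lam : ℝ := 3 * δ / (6 - 5 * δ) with hlam
  have hlam0 : 0 ≤ lam := by positivity
  set B : ℝ := (3 * δ ^ 2 * N * D') / (4 * n * (6 - 5 * δ)) with hB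
  set Ev : V × V → Finset (Fin N → V) := fun uv =>
    Finset.univ.filter fun f => a < ((lt uv.1 uv.2 f : ℕ) : ℝ) with hEv
  -- inclusion into the union
  have hsub : {f : Fin N → V | (dstar f : ℝ) / N > q * (1 - δ / 2)}
      ⊆ ⋃ uv ∈ (Finset.univ : Finset (V × V)), (↑(Ev uv) : Set (Fin N → V)) := by
    intro f hf
    have hf' : q * (1 - δ / 2) < (dstar f : ℝ) / N := hf
    have hfa : a < (dstar f : ℝ) := by
      rw [ha]
      have := (lt_div_iff₀ hNR).mp hf'
      linarith
    have hne : (Finset.univ : Finset (Fin N × Fin N)).Nonempty := by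
      have : Nonempty (Fin N) := ⟨⟨0, hN⟩⟩
      exact Finset.univ_nonempty
    obtain ⟨ij, _, hij⟩ := Finset.exists_mem_eq_sup Finset.univ hne
      fun ij : Fin N × Fin N => lt (f ij.1) (f ij.2) f
    have hdf : dstar f = lt (f ij.1) (f ij.2) f := by rw [hdstar, hij]
    refine Set.mem_biUnion (Finset.mem_univ (f ij.1, f ij.2)) ?_
    rw [Finset.mem_coe, hEv, Finset.mem_filter]
    refine ⟨Finset.mem_univ f, ?_⟩
    show a < ((lt (f ij.1) (f ij.2) f : ℕ) : ℝ)
    rw [← hdf]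
    exact hfa
  -- per-pair bound
  have hpair : ∀ uv : V × V, μ ↑(Ev uv) ≤ ENNReal.ofReal (Real.exp (-B)) := by
    rintro ⟨u, v⟩
    set A : Finset V := Finset.univ.filter
      (fun w => ∃ p : G.Walk u v, p.IsPath ∧ w ∈ p.support) with hA
    set m : ℝ := (A.card : ℝ) with hm
    have hm0 : 0 ≤ m := by positivity
    have hmn : m ≤ (n : ℝ) := by
      rw [hm, hn]
      exact_mod_cast A.card_le_univ.trans_eq (Finset.card_univ)
    have hmD : m ≤ (1 - δ) * D' := by
      obtain ⟨p₀, hp₀, huniq⟩ := hG.existsUnique_path u v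
      have hsubA : A ⊆ p₀.support.toFinset := by
        intro w hw
        rw [hA, Finset.mem_filter] at hw
        obtain ⟨p, hp, hwp⟩ := hw.2
        rw [huniq p hp] at hwp
        exact List.mem_toFinset.mpr hwp
      have h1 : A.card ≤ p₀.support.length :=
        (Finset.card_le_card hsubA).trans p₀.support.toFinset_card_le
      have h2 := hdiam u v p₀ hp₀
      calc m ≤ (p₀.support.length : ℝ) := by rw [hm]; exact_mod_cast h1
        _ ≤ (1 - δ) * D' := h2.le
    -- identify the event with a counting event
    have hlteq : ∀ f : Fin N → V, lt u v f = (Finset.univ.filter fun i => f i ∈ A).card := by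
      intro f
      rw [hlt]
      congr 1
      apply Finset.filter_congr
      intro i _
      rw [hA]
      simp
    have hEveq : Ev (u, v) = Finset.univ.filter fun f : Fin N → V =>
        a < (((Finset.univ.filter fun i => f i ∈ A).card : ℕ) : ℝ) := by
      rw [hEv]
      apply Finset.filter_congr
      intro f _
      rw [hlteq f]
    -- counting bound
    have hcount := aux_count A N a lam hlam0
    -- real-valued estimate
    have hstep : Real.exp (-(lam * a)) *
        ((A.card : ℝ) * Real.exp lam + ((Fintype.card V : ℝ) - A.card)) ^ N
        ≤ (n : ℝ) ^ N * Real.exp (-B) := by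
      have hcardV : ((Fintype.card V : ℝ)) = (n : ℝ) := by exact_mod_cast hn.symm
      rw [hcardV, ← hm]
      have hexplam1 : (0:ℝ) ≤ Real.exp lam - 1 := by
        have := Real.add_one_le_exp lam; linarith
      have hbase : m * Real.exp lam + ((n : ℝ) - m)
          ≤ (n : ℝ) * Real.exp (m / n * (Real.exp lam - 1)) := by
        have h1 : m * Real.exp lam + ((n : ℝ) - m)
            = (n : ℝ) * (1 + m / n * (Real.exp lam - 1)) := by
          field_simp
          ring
        rw [h1]
        apply mul_le_mul_of_nonneg_left _ hnR.le
        have := Real.add_one_le_exp (m / n * (Real.exp lam - 1))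
        linarith
      have hbase0 : (0:ℝ) ≤ m * Real.exp lam + ((n : ℝ) - m) := by
        have := mul_nonneg hm0 (Real.exp_pos lam).le
        linarith
      have hpow : (m * Real.exp lam + ((n : ℝ) - m)) ^ N
          ≤ ((n : ℝ) * Real.exp (m / n * (Real.exp lam - 1))) ^ N :=
        pow_le_pow_left₀ hbase0 hbase N
      have hpow2 : ((n : ℝ) * Real.exp (m / n * (Real.exp lam - 1))) ^ N
          = (n : ℝ) ^ N * Real.exp (N * (m / n * (Real.exp lam - 1))) := by
        rw [mul_pow, ← Real.exp_nat_mul]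
      -- exponent inequality
      have hexpineq : -(lam * a) + N * (m / n * (Real.exp lam - 1)) ≤ -B := by
        have hp_le : m / n ≤ (1 - δ) * q := by
          rw [hq, ← mul_div_assoc]
          gcongr
        have hbr := aux_bracket δ hδ0 hδ1
        rw [← hlam] at hbr
        have hNq : (0:ℝ) ≤ (N:ℝ) * q := by positivity
        have hfac : (N:ℝ) * q * ((1 - δ) * (Real.exp lam - 1) - lam * (1 - δ / 2)
            + 3 * δ ^ 2 / (4 * (6 - 5 * δ))) ≤ 0 :=
          mul_nonpos_of_nonneg_of_nonpos hNq hbr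
        have hBq : B = (N:ℝ) * q * (3 * δ ^ 2 / (4 * (6 - 5 * δ))) := by
          rw [hB, hq]; field_simp
        have hterm : (N:ℝ) * (m / n * (Real.exp lam - 1))
            ≤ (N:ℝ) * q * ((1 - δ) * (Real.exp lam - 1)) := by
          have h' := mul_le_mul_of_nonneg_right hp_le hexplam1
          have h'' := mul_le_mul_of_nonneg_left h' hNR.le
          calc (N:ℝ) * (m / n * (Real.exp lam - 1))
              ≤ (N:ℝ) * ((1 - δ) * q * (Real.exp lam - 1)) := h''
            _ = (N:ℝ) * q * ((1 - δ) * (Real.exp lam - 1)) := by ring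
        have hexpand : (N:ℝ) * q * ((1 - δ) * (Real.exp lam - 1) - lam * (1 - δ / 2)
              + 3 * δ ^ 2 / (4 * (6 - 5 * δ)))
            = (N:ℝ) * q * ((1 - δ) * (Real.exp lam - 1))
              - lam * ((N:ℝ) * (q * (1 - δ / 2)))
              + (N:ℝ) * q * (3 * δ ^ 2 / (4 * (6 - 5 * δ))) := by ring
        rw [ha, hBq]
        linarith
      calc Real.exp (-(lam * a)) * (m * Real.exp lam + ((n : ℝ) - m)) ^ N
          ≤ Real.exp (-(lam * a)) * ((n : ℝ) ^ N * Real.exp (N * (m / n * (Real.exp lam - 1)))) := by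
            rw [← hpow2]
            exact mul_le_mul_of_nonneg_left hpow (Real.exp_pos _).le
        _ = (n : ℝ) ^ N * Real.exp (-(lam * a) + N * (m / n * (Real.exp lam - 1))) := by
            rw [Real.exp_add]; ring
        _ ≤ (n : ℝ) ^ N * Real.exp (-B) := by
            apply mul_le_mul_of_nonneg_left (Real.exp_le_exp.mpr hexpineq) (by positivity)
    -- convert to measure bound
    have hreal : ((Ev (u, v)).card : ℝ) ≤ (n : ℝ) ^ N * Real.exp (-B) := by
      rw [hEveq]
      exact hcount.trans hstep
    rw [hμ, aux_measure]
    have hcardV : ((Fintype.card V : ℝ≥0∞)) = (n : ℝ≥0∞) := by exact_mod_cast hn.symm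
    rw [hcardV]
    have heq : ((Ev (u,v)).card : ℝ≥0∞) * ((n : ℝ≥0∞))⁻¹ ^ N
        = ENNReal.ofReal (((Ev (u,v)).card : ℝ) * ((n : ℝ)⁻¹) ^ N) := by
      rw [ENNReal.ofReal_mul (by positivity), ENNReal.ofReal_pow (by positivity),
        ENNReal.ofReal_inv_of_pos hnR, ENNReal.ofReal_natCast, ENNReal.ofReal_natCast]
    rw [heq]
    apply ENNReal.ofReal_le_ofReal
    rw [inv_pow, ← div_eq_mul_inv, div_le_iff₀ (by positivity)]
    calc ((Ev (u,v)).card : ℝ) ≤ (n : ℝ) ^ N * Real.exp (-B) := hreal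
      _ = Real.exp (-B) * (n : ℝ) ^ N := by ring
  -- assemble
  calc μ {f | (dstar f : ℝ) / N > q * (1 - δ / 2)}
      ≤ μ (⋃ uv ∈ (Finset.univ : Finset (V × V)), (↑(Ev uv) : Set (Fin N → V))) :=
        measure_mono hsub
    _ ≤ ∑ uv ∈ (Finset.univ : Finset (V × V)), μ ↑(Ev uv) :=
        measure_biUnion_finset_le _ _
    _ ≤ ∑ _uv ∈ (Finset.univ : Finset (V × V)), ENNReal.ofReal (Real.exp (-B)) :=
        Finset.sum_le_sum fun uv _ => hpair uv
    _ = ((Fintype.card (V × V) : ℕ) : ℝ≥0∞) * ENNReal.ofReal (Real.exp (-B)) := by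
        rw [Finset.sum_const, Finset.card_univ, nsmul_eq_mul]
    _ = ENNReal.ofReal ((n : ℝ) ^ 2 * Real.exp (-B)) := by
        rw [ENNReal.ofReal_mul (by positivity), Fintype.card_prod, ← hn]
        congr 1
        rw [← ENNReal.ofReal_natCast]
        congr 1
        push_cast
        ring
    _ = ENNReal.ofReal ((n : ℝ) ^ 2 *
        Real.exp (-(3 * δ ^ 2 * N * D') / (4 * n * (6 - 5 * δ)))) := by
        rw [hB, neg_div]
end

section
/- Let T be a tree, X ⊆ V(T), and T_X the minimal subtree spanning X. Then for vertices u, v ∈ V(T_X), uv is an edge of T_X if and only if: (i) u and v both lie on \overline{xx'} for some x, x' ∈ X, and (ii) for every w with d(x,x') = d(x,w) + d(w,x'), either d(x,w) ≤ min{d(x,u), d(x,v)} or d(w,x') ≤ min{d(u,x'), d(v,x')}, where d is any tree metric on T. -/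
open SimpleGraph Walk

namespace Stmt18Aux

variable {V : Type*} [DecidableEq V] {G : SimpleGraph V} {ω : Sym2 V → ℝ} {d : V → V → ℝ}

lemma takeUntil_cons' {x y w t : V} (r : G.Adj x y) (p : G.Walk y w)
    (ht : t ∈ p.support) (hne : x ≠ t) :
    (Walk.cons r p).takeUntil t (by simp [ht]) = Walk.cons r (p.takeUntil t ht) := by
  simp [Walk.takeUntil, hne]

lemma sum_pos' (hω : ∀ e ∈ G.edgeSet, 0 < ω e) {x y : V} (p : G.Walk x y) (hne : x ≠ y) :
    0 < (p.edges.map ω).sum := by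
  apply List.sum_pos
  · intro a ha
    obtain ⟨e, he, rfl⟩ := List.mem_map.mp ha
    exact hω e (p.edges_subset_edgeSet he)
  · cases p with
    | nil => exact absurd rfl hne
    | cons h q => simp

lemma sum_nonneg' (hω : ∀ e ∈ G.edgeSet, 0 < ω e) {x y : V} (p : G.Walk x y) :
    0 ≤ (p.edges.map ω).sum := by
  apply List.sum_nonneg
  intro a ha
  obtain ⟨e, he, rfl⟩ := List.mem_map.mp ha
  exact (hω e (p.edges_subset_edgeSet he)).le

section

variable (hG : G.IsTree) (hω : ∀ e ∈ G.edgeSet, 0 < ω e)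
  (hd : ∀ (u v : V) (p : G.Walk u v), p.IsPath → d u v = (p.edges.map ω).sum)

include hG hω hd

lemma d_self (x : V) : d x x = 0 := by
  have := hd x x Walk.nil (IsPath.nil)
  simpa using this

lemma d_pos {x y : V} (hne : x ≠ y) : 0 < d x y := by
  obtain ⟨p, hp, -⟩ := hG.existsUnique_path x y
  rw [hd x y p hp]
  exact sum_pos' hω p hne

lemma d_nonneg (x y : V) : 0 ≤ d x y := by
  rcases eq_or_ne x y with rfl | hne
  · rw [d_self hG hω hd]
  · exact (d_pos hG hω hd hne).le

lemma d_symm (x y : V) : d x y = d y x := by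
  obtain ⟨p, hp, -⟩ := hG.existsUnique_path x y
  rw [hd x y p hp, hd y x p.reverse hp.reverse, edges_reverse, List.map_reverse,
    List.sum_reverse]

lemma d_adj {x y : V} (h : G.Adj x y) : d x y = ω s(x, y) := by
  have hp : (Walk.cons h Walk.nil).IsPath := by
    simp [Walk.isPath_def, h.ne]
  rw [hd x y _ hp]
  simp

lemma d_split {x y w : V} (p : G.Walk x y) (hp : p.IsPath) (hw : w ∈ p.support) :
    d x y = d x w + d w y := by
  have hsum := congrArg (fun q : G.Walk x y => (q.edges.map ω).sum) (p.take_spec hw)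
  simp only [Walk.edges_append, List.map_append, List.sum_append] at hsum
  rw [hd x y p hp, hd x w _ (hp.takeUntil hw), hd w y _ (hp.dropUntil hw), ← hsum]

/-- In a tree, a vertex satisfying the triangle equality lies on the path. -/
lemma mem_of_deq {x x' : V} (p : G.Walk x x') (hp : p.IsPath) (w : V)
    (hw : d x x' = d x w + d w x') : w ∈ p.support := by
  induction p with
  | nil =>
    rename_i a
    have h0 : d a a = 0 := d_self hG hω hd a
    have hsymm : d w a = d a w := d_symm hG hω hd w a
    have hz : d a w = 0 := by rw [h0, hsymm] at hw; linarith [d_nonneg hG hω hd a w]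
    have hwa : w = a := by
      by_contra hne
      have hpos : 0 < d a w := d_pos hG hω hd (fun h => hne h.symm)
      exact absurd hz (ne_of_gt hpos)
    simp [hwa]
  | @cons a b c h p' ih =>
    rcases eq_or_ne w a with rfl | hwx
    · exact Walk.start_mem_support _
    obtain ⟨q, hq, -⟩ := hG.existsUnique_path a w
    obtain ⟨z, h2, q2, rfl⟩ := Walk.exists_eq_cons_of_ne (Ne.symm hwx) q
    have hq2 : q2.IsPath := hq.of_cons
    have hp' : p'.IsPath := hp.of_cons
    have hxz : d a w = ω s(a, z) + d z w := by
      rw [hd a w _ hq]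
      simp [hd z w q2 hq2]
    have hxy : d a c = ω s(a, b) + d b c := by
      rw [hd a c _ hp]
      simp [hd b c p' hp']
    by_cases hzy : z = b
    · subst hzy
      have : d z c = d z w + d w c := by
        rw [hxy] at hw; rw [hxz] at hw; linarith
      simp only [Walk.support_cons, List.mem_cons]
      exact Or.inr (ih hp' this)
    · -- first edges differ: the two paths from x meet only at x
      exfalso
      have key : ∀ t, t ∈ (Walk.cons h2 q2).support → t ∈ (Walk.cons h p').support → t = a := by
        intro t ht1 ht2
        by_contra htx
        have htx' : a ≠ t := fun h => htx h.symm
        have ht1' : t ∈ q2.support := by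
          rcases List.mem_cons.mp (by simpa using ht1) with h' | h'
          · exact absurd h'.symm htx'
          · exact h'
        have ht2' : t ∈ p'.support := by
          rcases List.mem_cons.mp (by simpa using ht2) with h' | h'
          · exact absurd h'.symm htx'
          · exact h'
        have e1 : (Walk.cons h2 q2).takeUntil t (by simp [ht1']) =
            Walk.cons h2 (q2.takeUntil t ht1') := takeUntil_cons' h2 q2 ht1' htx'
        have e2 : (Walk.cons h p').takeUntil t (by simp [ht2']) =
            Walk.cons h (p'.takeUntil t ht2') := takeUntil_cons' h p' ht2' htx'
        have hP1 : ((Walk.cons h2 q2).takeUntil t (by simp [ht1'])).IsPath :=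
          hq.takeUntil _
        have hP2 : ((Walk.cons h p').takeUntil t (by simp [ht2'])).IsPath :=
          hp.takeUntil _
        have huniq := (hG.existsUnique_path a t).unique hP1 hP2
        have := congrArg (fun q : G.Walk a t => q.getVert 1) huniq
        rw [e1, e2] at this
        simp only [Walk.getVert_cons_succ, Walk.getVert_zero] at this
        exact hzy this
      -- build the path from w to x' through x
      set A := (Walk.cons h2 q2).reverse with hA
      have hAp : A.IsPath := hq.reverse
      have hr : (A.append (Walk.cons h p')).IsPath := by
        rw [Walk.isPath_def, Walk.support_append, List.nodup_append]
        refine ⟨hAp.support_nodup, hp.support_nodup.tail, ?_⟩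
        intro t htA t' htB hteq
        subst hteq
        have htA' : t ∈ (Walk.cons h2 q2).support := by
          rw [hA, Walk.support_reverse] at htA
          exact List.mem_reverse.mp htA
        have htB' : t ∈ (Walk.cons h p').support := List.mem_of_mem_tail htB
        have hta : t = a := key t htA' htB'
        have hnp : a ∉ p'.support := by
          have hnd := hp.support_nodup
          simp only [Walk.support_cons, List.nodup_cons] at hnd
          exact hnd.1
        rw [Walk.support_cons, List.tail_cons, hta] at htB
        exact hnp htB
      have hwd : d w c = d a w + d a c := by
        rw [hd w c _ hr, Walk.edges_append]
        simp only [List.map_append, List.sum_append]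
        rw [hA, Walk.edges_reverse, List.map_reverse, List.sum_reverse]
        rw [← hd a w _ hq, ← hd a c _ hp]
      have hz0 : d a w = 0 := by linarith
      exact absurd hz0 (ne_of_gt (d_pos hG hω hd (Ne.symm hwx)))

/-- Trichotomy of order of two vertices on a path. -/
lemma d_tri {x x' u v : V} (p : G.Walk x x') (hp : p.IsPath)
    (hu : u ∈ p.support) (hv : v ∈ p.support) :
    d x v = d x u + d u v ∨ d x u = d x v + d u v := by
  have hdec : v ∈ (p.takeUntil u hu).support ∨ v ∈ (p.dropUntil u hu).support := by
    have := p.take_spec hu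
    rw [← this, Walk.mem_support_append_iff] at hv
    exact hv
  rcases hdec with hcase | hcase
  · right
    have := d_split hG hω hd (p.takeUntil u hu) (hp.takeUntil hu) hcase
    rw [this, d_symm hG hω hd v u]
  · left
    have h1 := d_split hG hω hd (p.dropUntil u hu) (hp.dropUntil hu) hcase
    have h2 := d_split hG hω hd p hp hu
    have h3 := d_split hG hω hd p hp hv
    linarith

/-- Forward direction core: if `u,v` adjacent with `u` before `v` on `p`. -/
lemma fwd_aux {x x' u v : V} (p : G.Walk x x') (hp : p.IsPath)
    (hu : u ∈ p.support) (hv : v ∈ p.support) (hadj : G.Adj u v)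
    (horder : d x v = d x u + d u v) :
    ∀ w : V, d x x' = d x w + d w x' →
      d x w ≤ min (d x u) (d x v) ∨ d w x' ≤ min (d u x') (d v x') := by
  intro w hw
  have hws : w ∈ p.support := mem_of_deq hG hω hd p hp w hw
  have hsu : d x x' = d x u + d u x' := d_split hG hω hd p hp hu
  have hsv : d x x' = d x v + d v x' := d_split hG hω hd p hp hv
  have hduv : 0 < d u v := d_pos hG hω hd hadj.ne
  have hmin1 : min (d x u) (d x v) = d x u := min_eq_left (by linarith)
  have hmin2 : min (d u x') (d v x') = d v x' := min_eq_right (by linarith)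
  rw [hmin1, hmin2]
  have hsuff : d x w ≤ d x u ∨ d x v ≤ d x w := by
    rcases d_tri hG hω hd p hp hu hws with h1 | h1
    · -- d x w = d x u + d u w
      rcases d_tri hG hω hd p hp hv hws with h2 | h2
      · right
        have := d_nonneg hG hω hd v w
        linarith
      · -- d x v = d x w + d v w, so d u w + d w v = d u v
        have hwv : d u v = d u w + d w v := by
          rw [d_symm hG hω hd w v]
          linarith
        have hep : (Walk.cons hadj Walk.nil).IsPath := by
          simp [Walk.isPath_def, hadj.ne]
        have hmem := mem_of_deq hG hω hd (Walk.cons hadj Walk.nil) hep w hwv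
        simp only [Walk.support_cons, Walk.support_nil, List.mem_cons,
          List.mem_singleton] at hmem
        rcases hmem with rfl | hmem
        · left; linarith [d_self hG hω hd w]
        · rcases hmem with rfl | h
          · right; linarith
          · exact absurd h List.not_mem_nil
    · left
      have := d_nonneg hG hω hd u w
      linarith
  rcases hsuff with h | h
  · left; exact h
  · right; linarith

/-- Backward direction core. -/
lemma back_aux {x x' u v : V} (p : G.Walk x x') (hp : p.IsPath)
    (hu : u ∈ p.support) (huv : u ≠ v) (hvd : v ∈ (p.dropUntil u hu).support)
    (C : ∀ w : V, d x x' = d x w + d w x' →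
      d x w ≤ min (d x u) (d x v) ∨ d w x' ≤ min (d u x') (d v x')) :
    s(u, v) ∈ p.edges := by
  have hdp : (p.dropUntil u hu).IsPath := hp.dropUntil hu
  set q := (p.dropUntil u hu).takeUntil v hvd with hqdef
  have hq : q.IsPath := hdp.takeUntil hvd
  have hqsub : q.edges ⊆ p.edges :=
    List.Subset.trans (Walk.edges_takeUntil_subset_edges _ hvd) (Walk.edges_dropUntil_subset_edges _ hu)
  obtain ⟨y, ha, q2, hqe⟩ := Walk.exists_eq_cons_of_ne huv q
  by_cases hyv : y = v
  · subst hyv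
    apply hqsub
    rw [hqe]
    simp
  · exfalso
    have hyq : y ∈ q.support := by rw [hqe]; simp
    have hyd : y ∈ (p.dropUntil u hu).support :=
      Walk.support_takeUntil_subset _ hvd hyq
    have hyp : y ∈ p.support := Walk.support_dropUntil_subset _ hu hyd
    have hvp : v ∈ p.support := Walk.support_dropUntil_subset _ hu hvd
    have hSu : d x x' = d x u + d u x' := d_split hG hω hd p hp hu
    have hSv : d x x' = d x v + d v x' := d_split hG hω hd p hp hvp
    have hSy : d x x' = d x y + d y x' := d_split hG hω hd p hp hyp
    have hS1 : d u x' = d u y + d y x' :=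
      d_split hG hω hd (p.dropUntil u hu) hdp hyd
    have hS2 : d u x' = d u v + d v x' :=
      d_split hG hω hd (p.dropUntil u hu) hdp hvd
    have hS3 : d u v = d u y + d y v := d_split hG hω hd q hq (by rw [hqe]; simp)
    have hduy : 0 < d u y := d_pos hG hω hd ha.ne
    have hdyv : 0 < d y v := d_pos hG hω hd hyv
    rcases C y hSy with hc | hc
    · have := min_le_left (d x u) (d x v)
      linarith
    · have := min_le_right (d u x') (d v x')
      linarith

end

end Stmt18Aux

/-- Let `T_X` be the minimal subtree spanning `X`, with tree metric `d`
induced by positive edge weights. For distinct vertices `u, v` of `T_X`, `uv` is an edge of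
`T_X` iff there exist `x, x' ∈ X` such that (i) `u` and `v` both lie on the path from `x` to
`x'`, and (ii) every `w` with `d x x' = d x w + d w x'` satisfies
`d x w ≤ min (d x u) (d x v)` or `d w x' ≤ min (d u x') (d v x')`. -/
theorem stmt18 {V : Type*} [Fintype V] (G : SimpleGraph V) (hG : G.IsTree)
    (ω : Sym2 V → ℝ) (hω : ∀ e ∈ G.edgeSet, 0 < ω e)
    (d : V → V → ℝ)
    (hd : ∀ (u v : V) (p : G.Walk u v), p.IsPath → d u v = (p.edges.map ω).sum)
    (X : Set V)
    (VX : Set V)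
    (hVX : VX = {w : V | ∃ x ∈ X, ∃ x' ∈ X, ∃ p : G.Walk x x', p.IsPath ∧ w ∈ p.support})
    (u v : V) (hu : u ∈ VX) (hv : v ∈ VX) (huv : u ≠ v) :
    (∃ x ∈ X, ∃ x' ∈ X, ∃ p : G.Walk x x', p.IsPath ∧ s(u, v) ∈ p.edges) ↔
      (∃ x ∈ X, ∃ x' ∈ X, ∃ p : G.Walk x x', p.IsPath ∧ u ∈ p.support ∧ v ∈ p.support ∧
        ∀ w : V, d x x' = d x w + d w x' →
          d x w ≤ min (d x u) (d x v) ∨ d w x' ≤ min (d u x') (d v x')) := by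
  classical
  open Stmt18Aux in
  constructor
  · rintro ⟨x, hx, x', hx', p, hp, he⟩
    have hus : u ∈ p.support := p.fst_mem_support_of_mem_edges he
    have hvs : v ∈ p.support := p.snd_mem_support_of_mem_edges he
    have hadj : G.Adj u v := p.adj_of_mem_edges he
    refine ⟨x, hx, x', hx', p, hp, hus, hvs, ?_⟩
    rcases d_tri hG hω hd p hp hus hvs with h1 | h1
    · exact fwd_aux hG hω hd p hp hus hvs hadj h1
    · intro w hw
      have h1' : d x u = d x v + d v u := by
        rw [d_symm hG hω hd v u]; exact h1
      have := fwd_aux hG hω hd p hp hvs hus hadj.symm h1' w hw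
      rw [min_comm (d x u) (d x v), min_comm (d u x') (d v x')]
      exact this
  · rintro ⟨x, hx, x', hx', p, hp, hus, hvs, C⟩
    refine ⟨x, hx, x', hx', p, hp, ?_⟩
    have hdec : v ∈ (p.takeUntil u hus).support ∨ v ∈ (p.dropUntil u hus).support := by
      have := p.take_spec hus
      rw [← this, Walk.mem_support_append_iff] at hvs
      exact hvs
    rcases hdec with hcase | hcase
    · -- v before u: show u ∈ dropUntil v
      have hdec2 : u ∈ (p.takeUntil v hvs).support ∨ u ∈ (p.dropUntil v hvs).support := by
        have := p.take_spec hvs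
        rw [← this, Walk.mem_support_append_iff] at hus
        exact hus
      have hud : u ∈ (p.dropUntil v hvs).support := by
        rcases hdec2 with h2 | h2
        · exfalso
          have e1 := d_split hG hω hd (p.takeUntil u hus) (hp.takeUntil hus) hcase
          have e2 := d_split hG hω hd (p.takeUntil v hvs) (hp.takeUntil hvs) h2
          have hpos1 : 0 < d v u := d_pos hG hω hd (Ne.symm huv)
          have hpos2 : 0 < d u v := d_pos hG hω hd huv
          linarith
        · exact h2
      have C' : ∀ w : V, d x x' = d x w + d w x' →
          d x w ≤ min (d x v) (d x u) ∨ d w x' ≤ min (d v x') (d u x') := by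
        intro w hw
        rw [min_comm (d x v) (d x u), min_comm (d v x') (d u x')]
        exact C w hw
      have := back_aux hG hω hd p hp hvs (Ne.symm huv) hud C'
      rwa [Sym2.eq_swap] at this
    · exact back_aux hG hω hd p hp hus huv hcase C
end
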